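/- Let f ∈ RF with sign ε of the Walsh transform, m even, and β ∈ 𝔽_q^×. Let N_{f,β} = #{x ∈ 𝔽_q : f(x)=0 and Tr(βx)=0}. Then N_{f,β} = p^{m-2} + ε(-1/p)^{m/2}(p-1)p^{(m-2)/2} if f*(β)=0, and N_{f,β} = p^{m-2} if f*(β)≠0. -/

import Mathlib

open Complex Polynomial Finset

noncomputable def zp (p : ℕ) : ℂ := Complex.exp (2 * Real.pi * Complex.I / p)

noncomputable def sqrtPstar (p : ℕ) : ℂ :=
  if p % 4 = 1 then (Real.sqrt p : ℂ) else (Real.sqrt p : ℂ) * Complex.I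

set_option maxHeartbeats 1000000

section helpers
variable (p : ℕ) [Fact p.Prime]

lemma zp_prim : IsPrimitiveRoot (zp p) p := by
  have := Complex.isPrimitiveRoot_exp p (Nat.Prime.ne_zero Fact.out)
  exact this

lemma zp_pow_p : zp p ^ p = 1 := (zp_prim p).pow_eq_one

lemma zp_pow_mod (n : ℕ) : zp p ^ (n % p) = zp p ^ n := by
  conv_rhs => rw [← Nat.div_add_mod n p, pow_add, pow_mul, zp_pow_p, one_pow, one_mul]

lemma zp_val_add (a b : ZMod p) : zp p ^ (a + b).val = zp p ^ a.val * zp p ^ b.val := by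
  have : Fact (1 < p) := ⟨(Fact.out : p.Prime).one_lt⟩
  rw [ZMod.val_add, zp_pow_mod, pow_add]

lemma zp_val_mul (a b : ZMod p) : zp p ^ (a * b).val = (zp p ^ a.val) ^ b.val := by
  rw [ZMod.val_mul, zp_pow_mod, pow_mul]

lemma zp_val_inj {a b : ZMod p} (hab : zp p ^ a.val = zp p ^ b.val) : a = b :=
  ZMod.val_injective p ((zp_prim p).pow_inj (ZMod.val_lt a) (ZMod.val_lt b) hab)

lemma zp_sum_univ : ∑ c : ZMod p, zp p ^ c.val = 0 := by
  have h1 : (zp p) ≠ 1 := by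
    intro h
    have := (zp_prim p).pow_inj (show 1 < p from (Fact.out : p.Prime).one_lt)
      (show 0 < p from (Fact.out : p.Prime).pos) (by simpa using h)
    omega
  have : ∑ c : ZMod p, zp p ^ c.val = ∑ i ∈ range p, zp p ^ i := by
    refine Finset.sum_nbij' (fun c => c.val) (fun i => (i : ZMod p)) ?_ ?_ ?_ ?_ ?_ <;>
      simp +contextual [ZMod.val_lt, ZMod.val_cast_of_lt, Finset.mem_range,
        ZMod.natCast_val, ZMod.cast_id, Nat.mod_eq_of_lt]
  rw [this, geom_sum_eq h1, zp_pow_p]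
  simp


lemma zp_sum_mul (t : ZMod p) :
    ∑ y : ZMod p, zp p ^ (y * t).val = if t = 0 then (p : ℂ) else 0 := by
  rcases eq_or_ne t 0 with rfl | ht
  · simp [ZMod.val_zero]
  · simp only [if_neg ht]
    have : ∑ y : ZMod p, zp p ^ (y * t).val = ∑ u : ZMod p, zp p ^ u.val :=
      Fintype.sum_equiv (Equiv.mulRight₀ t ht) _ _ (fun y => rfl)
    rw [this, zp_sum_univ]

/-- Galois conjugation via minimal polynomials. -/
lemma zp_galois {ι : Type*} (S : Finset ι) (v : ι → ZMod p) (r : ℤ) (c : ZMod p)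
    (hEq : ∑ i ∈ S, zp p ^ (v i).val = (r : ℂ) * zp p ^ c.val) (u : ZMod p) (hu : u ≠ 0) :
    ∑ i ∈ S, zp p ^ (u * v i).val = (r : ℂ) * zp p ^ (u * c).val := by
  have hζ := zp_prim p
  have hp : p.Prime := Fact.out
  set A : ℚ[X] := (∑ i ∈ S, X ^ (v i).val) - C (r : ℚ) * X ^ c.val with hA
  have hroot : aeval (zp p) A = 0 := by
    simp only [hA, map_sub, map_sum, map_mul, map_pow, aeval_X, aeval_C]
    rw [sub_eq_zero]
    simpa using hEq
  have hint : IsIntegral ℚ (zp p) := (hζ.isIntegral hp.pos).tower_top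
  have hdvd : minpoly ℚ (zp p) ∣ A := minpoly.dvd ℚ (zp p) hroot
  have hvne : u.val ≠ 0 := fun hv => hu (ZMod.val_injective p (by simpa using hv))
  have hcop : Nat.Coprime u.val p :=
    Nat.Coprime.symm ((Nat.Prime.coprime_iff_not_dvd hp).mpr
      (fun hdvd' => hvne (Nat.eq_zero_of_dvd_of_lt hdvd' (ZMod.val_lt u))))
  have hζu : IsPrimitiveRoot (zp p ^ u.val) p := hζ.pow_of_coprime u.val hcop
  have hmin : minpoly ℚ (zp p) = minpoly ℚ (zp p ^ u.val) := by
    rw [← Polynomial.cyclotomic_eq_minpoly_rat hζ hp.pos,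
      ← Polynomial.cyclotomic_eq_minpoly_rat hζu hp.pos]
  have hroot2 : aeval (zp p ^ u.val) A = 0 := by
    obtain ⟨Q, hQ⟩ := hdvd
    rw [hQ, map_mul, hmin, minpoly.aeval, zero_mul]
  have := hroot2
  simp only [hA, map_sub, map_sum, map_mul, map_pow, aeval_X, aeval_C, sub_eq_zero] at this
  calc ∑ i ∈ S, zp p ^ (u * v i).val = ∑ i ∈ S, (zp p ^ u.val) ^ (v i).val := by
        refine Finset.sum_congr rfl fun i _ => ?_
        rw [mul_comm u (v i), zp_val_mul, ← pow_mul, ← pow_mul, mul_comm]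
    _ = (r : ℂ) * (zp p ^ u.val) ^ c.val := by simpa using this
    _ = (r : ℂ) * zp p ^ (u * c).val := by
        rw [mul_comm u c, zp_val_mul, ← pow_mul, ← pow_mul, mul_comm (ZMod.val c)]


lemma zp_coeffs (M : ZMod p → ℤ) (r' : ℤ)
    (hEq : ∑ c : ZMod p, (M c : ℂ) * zp p ^ c.val = (r' : ℂ))
    {c d : ZMod p} (hc : c ≠ 0) (hd : d ≠ 0) : M c = M d := by
  have hζ : IsPrimitiveRoot (zp p) p := zp_prim p
  have hp : p.Prime := Fact.out
  set B : ℚ[X] := (∑ e : ZMod p, C (M e : ℚ) * X ^ e.val) - C (r' : ℚ) with hB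
  have hroot : aeval (zp p) B = 0 := by
    simp only [hB, map_sub, map_sum, map_mul, map_pow, aeval_X, aeval_C, sub_eq_zero]
    push_cast
    simpa using hEq
  have hdvd : Polynomial.cyclotomic p ℚ ∣ B := by
    rw [Polynomial.cyclotomic_eq_minpoly_rat hζ hp.pos]
    exact minpoly.dvd ℚ (zp p) hroot
  -- coefficient of B at e.val for e ≠ 0 equals M e
  have hcoeff : ∀ e : ZMod p, e ≠ 0 → B.coeff e.val = (M e : ℚ) := by
    intro e he
    have hev : e.val ≠ 0 := fun hv => he (ZMod.val_injective p (by simpa using hv))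
    rw [hB, Polynomial.coeff_sub, Polynomial.coeff_C, if_neg hev, sub_zero,
      Polynomial.finset_sum_coeff]
    rw [Finset.sum_eq_single e]
    · simp [Polynomial.coeff_C_mul, Polynomial.coeff_X_pow]
    · intro b _ hbe
      have : b.val ≠ e.val := fun hv => hbe (ZMod.val_injective p hv)
      have h2 : e.val ≠ b.val := Ne.symm this
      simp [Polynomial.coeff_C_mul, Polynomial.coeff_X_pow, h2]
    · simp
  obtain ⟨Q, hQ⟩ := hdvd
  rcases eq_or_ne B 0 with hB0 | hB0
  · have h1 := hcoeff c hc; have h2 := hcoeff d hd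
    rw [hB0] at h1 h2
    simp only [Polynomial.coeff_zero] at h1 h2
    exact_mod_cast h1.symm.trans h2
  · have hQ0 : Q ≠ 0 := fun hq => hB0 (by rw [hQ, hq, mul_zero])
    have hdegB : B.natDegree ≤ p - 1 := by
      rw [hB]
      refine le_trans (Polynomial.natDegree_sub_le _ _) ?_
      simp only [max_le_iff]
      constructor
      · refine le_trans (Polynomial.natDegree_sum_le _ _) ?_
        refine Finset.sup_le fun e _ => ?_
        refine le_trans (Polynomial.natDegree_C_mul_le _ _) ?_
        simp only [Polynomial.natDegree_X_pow]
        have := ZMod.val_lt e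
        omega
      · simp
    have hdegQ : Q.natDegree = 0 := by
      have := Polynomial.natDegree_mul (Polynomial.cyclotomic.monic p ℚ).ne_zero hQ0
      rw [← hQ] at this
      rw [Polynomial.natDegree_cyclotomic, Nat.totient_prime hp] at this
      omega
    obtain ⟨q, rfl⟩ := Polynomial.natDegree_eq_zero.mp hdegQ
    have key : ∀ e : ZMod p, e ≠ 0 → (M e : ℚ) = q := by
      intro e he
      rw [← hcoeff e he, hQ, Polynomial.coeff_mul_C, Polynomial.cyclotomic_prime,
        Polynomial.finset_sum_coeff]
      have : ∀ i ∈ Finset.range p, (X ^ i : ℚ[X]).coeff e.val = if i = e.val then 1 else 0 := by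
        intro i _
        rw [Polynomial.coeff_X_pow]
        simp [eq_comm]
      rw [Finset.sum_congr rfl this, Finset.sum_ite_eq' (Finset.range p) e.val (fun _ => (1:ℚ))]
      simp [ZMod.val_lt e]
    have := (key c hc).trans (key d hd).symm
    exact_mod_cast this

lemma pow_surj_units (h' : ℕ) (hcop : Nat.gcd h' (p - 1) = 1) (w : (ZMod p)ˣ) :
    ∃ c : (ZMod p)ˣ, c ^ h' = w := by
  have hc : (Nat.card (ZMod p)ˣ).Coprime h' := by
    rw [Nat.card_eq_fintype_card, ZMod.card_units_eq_totient, Nat.totient_prime Fact.out]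
    exact Nat.coprime_comm.mp hcop
  exact ⟨(powCoprime hc).symm w, (powCoprime hc).apply_symm_apply w⟩


lemma sqrtPstar_sq (p : ℕ) [Fact p.Prime] (hp2 : p ≠ 2) :
    sqrtPstar p ^ 2 = ((legendreSym p (-1) * p : ℤ) : ℂ) := by
  have hp : p.Prime := Fact.out
  have hodd : p % 2 = 1 := (Nat.Prime.mod_two_eq_one_iff_ne_two hp).mpr hp2
  have hsq : ((Real.sqrt p : ℂ)) ^ 2 = (p : ℂ) := by
    rw [← Complex.ofReal_pow, Real.sq_sqrt (by positivity)]
    norm_num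
  have hl := legendreSym.at_neg_one (p := p) hp2
  rcases Nat.even_or_odd (p / 2) with hpe | hpo
  · obtain ⟨k, hk⟩ := hpe
    have hp4 : p % 4 = 1 := by omega
    rw [sqrtPstar, if_pos hp4, hsq, hl, ZMod.χ₄_nat_one_mod_four hp4]
    push_cast; ring
  · obtain ⟨k, hk⟩ := hpo
    have hp4 : p % 4 = 3 := by omega
    rw [sqrtPstar, if_neg (by omega), hl, ZMod.χ₄_nat_three_mod_four hp4]
    rw [mul_pow, hsq, Complex.I_sq]
    push_cast; ring

lemma sqrtPstar_pow (p : ℕ) [Fact p.Prime] (hp2 : p ≠ 2) {m : ℕ} (hme : Even m) :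
    sqrtPstar p ^ m = ((legendreSym p (-1) ^ (m / 2) * p ^ (m / 2) : ℤ) : ℂ) := by
  obtain ⟨k, hk⟩ := hme
  have hm2 : m = 2 * k := by omega
  have hk2 : m / 2 = k := by omega
  rw [hk2, hm2, pow_mul, sqrtPstar_sq p hp2]
  push_cast
  ring


variable (F : Type) [Field F] [Fintype F] [DecidableEq F] [Algebra (ZMod p) F]

lemma zp_tr_sum (γ : F) :
    ∑ x : F, zp p ^ (Algebra.trace (ZMod p) F (γ * x)).val
      = if γ = 0 then (Fintype.card F : ℂ) else 0 := by
  classical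
  rcases eq_or_ne γ 0 with rfl | hγ
  · simp [ZMod.val_zero]
  · simp only [if_neg hγ]
    obtain ⟨b, hb⟩ : ∃ b : F, Algebra.trace (ZMod p) F (γ * b) ≠ 0 := by
      have htr := (traceForm_nondegenerate (ZMod p) F).1 γ
      simp_rw [Algebra.traceForm_apply] at htr
      by_contra! hf
      exact hγ (htr hf)
    set S := ∑ x : F, zp p ^ (Algebra.trace (ZMod p) F (γ * x)).val with hS
    have key : S * zp p ^ (Algebra.trace (ZMod p) F (γ * b)).val = S := by
      rw [hS, Finset.sum_mul]
      refine Fintype.sum_equiv (Equiv.addRight b) _ _ fun x => ?_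
      rw [← zp_val_add, ← map_add, ← mul_add]
      rfl
    have hne : zp p ^ (Algebra.trace (ZMod p) F (γ * b)).val ≠ 1 := by
      intro hcon
      exact hb (zp_val_inj p (by simpa [ZMod.val_zero] using hcon))
    by_contra hS0
    exact hne (mul_left_cancel₀ hS0 (by rw [key, mul_one]))


lemma orbit_dvd (S : Finset F) (h0 : (0:F) ∉ S)
    (hinv : ∀ (a : (ZMod p)ˣ), ∀ β ∈ S, algebraMap (ZMod p) F (a : ZMod p) * β ∈ S) :
    (p - 1) ∣ S.card := by
  generalize hn : S.card = n
  induction n using Nat.strong_induction_on generalizing S with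
  | _ n ih =>
    rcases S.eq_empty_or_nonempty with rfl | ⟨β, hβ⟩
    · rw [Finset.card_empty] at hn; exact hn ▸ dvd_zero _
    · have hβ0 : β ≠ 0 := fun hc => h0 (hc ▸ hβ)
      have halg : Function.Injective (algebraMap (ZMod p) F) := (algebraMap (ZMod p) F).injective
      set O := Finset.image (fun a : (ZMod p)ˣ => algebraMap (ZMod p) F (a : ZMod p) * β)
        Finset.univ with hO
      have hinj : Function.Injective
          (fun a : (ZMod p)ˣ => algebraMap (ZMod p) F (a : ZMod p) * β) := by
        intro a b hab
        exact Units.ext (halg (mul_right_cancel₀ hβ0 hab))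
      have hOcard : O.card = p - 1 := by
        rw [hO, Finset.card_image_of_injective _ hinj, Finset.card_univ,
          ZMod.card_units_eq_totient, Nat.totient_prime Fact.out]
      have hOS : O ⊆ S := by
        intro x hx
        rw [hO, Finset.mem_image] at hx
        obtain ⟨a, _, rfl⟩ := hx
        exact hinv a β hβ
      have hmem : ∀ x, x ∈ O ↔ ∃ a : (ZMod p)ˣ, algebraMap (ZMod p) F (a : ZMod p) * β = x := by
        intro x; rw [hO, Finset.mem_image]; simp
      have hcard : S.card = O.card + (S \ O).card := by
        rw [Finset.card_sdiff_of_subset hOS]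
        have : O.card ≤ S.card := Finset.card_le_card hOS
        omega
      have hsd : (S \ O).card < n := by
        have hp1 : 1 ≤ p - 1 := by have := (Fact.out : p.Prime).two_le; omega
        rw [Finset.card_sdiff_of_subset hOS]
        have : O.card ≤ S.card := Finset.card_le_card hOS
        omega
      have hinv' : ∀ (a : (ZMod p)ˣ), ∀ x ∈ S \ O, algebraMap (ZMod p) F (a : ZMod p) * x ∈ S \ O := by
        intro a x hx
        rw [Finset.mem_sdiff] at hx ⊢
        refine ⟨hinv a x hx.1, fun hc => hx.2 ?_⟩
        obtain ⟨b, hb⟩ := (hmem _).mp hc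
        refine (hmem x).mpr ⟨a⁻¹ * b, ?_⟩
        rw [Units.val_mul, map_mul, mul_assoc, hb, ← mul_assoc]
        have : algebraMap (ZMod p) F ((a⁻¹ : (ZMod p)ˣ) : ZMod p)
            = (algebraMap (ZMod p) F ((a : (ZMod p)ˣ) : ZMod p))⁻¹ := by
          rw [← map_inv₀]
          norm_cast
        rw [this, inv_mul_cancel₀ (by
          intro hz
          exact (a : (ZMod p)ˣ).ne_zero (halg (by simpa using hz))), one_mul]
      have h0' : (0:F) ∉ S \ O := fun hc => h0 (Finset.mem_sdiff.mp hc).1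
      have hdvd2 := ih _ hsd (S \ O) h0' hinv' rfl
      rw [← hn, hcard, hOcard]
      exact Nat.dvd_add ⟨1, by ring⟩ hdvd2


end helpers

theorem stmt_13 (p m : ℕ) [Fact p.Prime] (hp2 : p ≠ 2) (hme : Even m) (hm : 2 ≤ m)
    (F : Type) [Field F] [Fintype F] [DecidableEq F] [Algebra (ZMod p) F]
    (hcard : Fintype.card F = p ^ m)
    (f fstar : F → ZMod p) (ε : ℤ) (hε : ε = 1 ∨ ε = -1)
    (hW : ∀ β : F, ∑ x : F, zp p ^ (f x + Algebra.trace (ZMod p) F (β * x)).val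
      = (ε : ℂ) * sqrtPstar p ^ m * zp p ^ (fstar β).val)
    (hf0 : f 0 = 0) (h : ℕ) (hh : Nat.gcd (h - 1) (p - 1) = 1)
    (hhom : ∀ (a : (ZMod p)ˣ) (x : F),
      f (algebraMap (ZMod p) F (a : ZMod p) * x) = (a : ZMod p) ^ h * f x)
    (β : F) (hβ : β ≠ 0) :
    (fstar β = 0 →
      (((Finset.univ.filter fun x : F => f x = 0 ∧ Algebra.trace (ZMod p) F (β * x) = 0).card : ℤ)
        = (p : ℤ) ^ (m - 2) + ε * (legendreSym p (-1)) ^ (m / 2) * (p - 1) * (p : ℤ) ^ ((m - 2) / 2)))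
    ∧ (fstar β ≠ 0 →
      (((Finset.univ.filter fun x : F => f x = 0 ∧ Algebra.trace (ZMod p) F (β * x) = 0).card : ℤ)
        = (p : ℤ) ^ (m - 2))) := by
  classical
  have hp : p.Prime := Fact.out
  have hp3 : 3 ≤ p := by
    have := hp.two_le
    rcases Nat.lt_or_ge p 3 with h3 | h3
    · interval_cases p <;> simp_all
    · exact h3
  set L : ℤ := legendreSym p (-1) with hL
  have hL1 : L = 1 ∨ L = -1 := by
    rw [hL]
    exact legendreSym.eq_one_or_neg_one p (a := -1) (by
      simp only [Int.cast_neg, Int.cast_one, ne_eq, neg_eq_zero]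
      exact one_ne_zero)
  set r : ℤ := ε * (L ^ (m / 2) * p ^ (m / 2)) with hr
  have hrC : ∀ γ : F, ∑ x : F, zp p ^ (f x + Algebra.trace (ZMod p) F (γ * x)).val
      = (r : ℂ) * zp p ^ (fstar γ).val := by
    intro γ
    rw [hW γ, sqrtPstar_pow p hp2 hme, hr]
    push_cast
    ring
  have hr0 : (r : ℂ) ≠ 0 := by
    have : r ≠ 0 := by
      rw [hr]
      rcases hε with rfl | rfl <;> rcases hL1 with hl | hl <;> rw [hl] <;>
        simp [pow_ne_zero, hp.pos.ne']
    exact_mod_cast this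
  have halg : Function.Injective (algebraMap (ZMod p) F) := (algebraMap (ZMod p) F).injective
  have h2le : 2 ≤ h := by
    by_contra hcon
    interval_cases h <;> simp_all <;> omega
  have hTr : ∀ (z : ZMod p) (v : F),
      z * Algebra.trace (ZMod p) F v = Algebra.trace (ZMod p) F (algebraMap (ZMod p) F z * v) := by
    intro z v
    rw [← Algebra.smul_def, map_smul, smul_eq_mul]
  -- homogeneity of the dual
  have hHOM : ∀ (c : (ZMod p)ˣ) (γ : F),
      fstar (algebraMap (ZMod p) F ((c : ZMod p) ^ (h - 1)) * γ)
        = (c : ZMod p) ^ h * fstar γ := by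
    intro c γ
    have hc0 : (c : ZMod p) ≠ 0 := c.ne_zero
    have hch0 : ((c : ZMod p) ^ h) ≠ 0 := pow_ne_zero _ hc0
    have hg := zp_galois p Finset.univ
      (fun x => f x + Algebra.trace (ZMod p) F (γ * x)) r (fstar γ) (hrC γ)
      ((c : ZMod p) ^ h) hch0
    have hcF0 : algebraMap (ZMod p) F (c : ZMod p) ≠ 0 := fun hz => hc0 (halg (by simpa using hz))
    have key : ∀ x : F, ((c : ZMod p) ^ h) * (f x + Algebra.trace (ZMod p) F (γ * x))
        = f (algebraMap (ZMod p) F (c : ZMod p) * x)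
          + Algebra.trace (ZMod p) F ((algebraMap (ZMod p) F ((c : ZMod p) ^ (h - 1)) * γ)
              * (algebraMap (ZMod p) F (c : ZMod p) * x)) := by
      intro x
      have e2 : (algebraMap (ZMod p) F ((c : ZMod p) ^ (h - 1)) * γ)
            * (algebraMap (ZMod p) F (c : ZMod p) * x)
          = algebraMap (ZMod p) F ((c : ZMod p) ^ h) * (γ * x) := by
        rw [map_pow, map_pow]
        calc (algebraMap (ZMod p) F (c : ZMod p)) ^ (h - 1) * γ
              * (algebraMap (ZMod p) F (c : ZMod p) * x)
            = (algebraMap (ZMod p) F (c : ZMod p)) ^ (h - 1)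
              * algebraMap (ZMod p) F (c : ZMod p) * (γ * x) := by ring
          _ = (algebraMap (ZMod p) F (c : ZMod p)) ^ h * (γ * x) := by
              rw [← pow_succ, Nat.sub_add_cancel (by omega)]
      rw [hhom c x, e2, ← hTr]
      ring
    have lhs : ∑ x : F, zp p ^ (((c : ZMod p) ^ h) * (f x + Algebra.trace (ZMod p) F (γ * x))).val
        = ∑ x : F, zp p ^ ((f x + Algebra.trace (ZMod p) F
            ((algebraMap (ZMod p) F ((c : ZMod p) ^ (h - 1)) * γ) * x)).val) := by
      refine Fintype.sum_bijective (fun x : F => algebraMap (ZMod p) F (c : ZMod p) * x)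
        (mulLeft_bijective₀ _ hcF0) _ _ fun x => ?_
      rw [key x]
    rw [lhs, hrC] at hg
    have := mul_left_cancel₀ hr0 hg
    exact zp_val_inj p this
  -- surjectivity of (h-1) power map
  have hpow : ∀ w : ZMod p, w ≠ 0 → ∃ c : (ZMod p)ˣ, (c : ZMod p) ^ (h - 1) = w := by
    intro w hw
    obtain ⟨c, hc⟩ := pow_surj_units p (h - 1) hh (Units.mk0 w hw)
    exact ⟨c, by rw [← Units.val_pow_eq_pow_val, hc, Units.val_mk0]⟩
  -- dual scaling: zero iff
  have hiff : ∀ w : ZMod p, w ≠ 0 →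
      (fstar (algebraMap (ZMod p) F w * β) = 0 ↔ fstar β = 0) := by
    intro w hw
    obtain ⟨c, hc⟩ := hpow w hw
    rw [← hc, hHOM c β]
    constructor
    · intro hz
      rcases mul_eq_zero.mp hz with hz | hz
      · exact absurd hz (pow_ne_zero _ c.ne_zero)
      · exact hz
    · intro hz; rw [hz, mul_zero]
  -- fstar 0 = 0
  have hfs0 : fstar 0 = 0 := by
    by_cases hcase : ∀ c : (ZMod p)ˣ, (c : ZMod p) ^ h = 1
    · have hinvf : ∀ (w : ZMod p), w ≠ 0 → ∀ γ : F,
          fstar (algebraMap (ZMod p) F w * γ) = fstar γ := by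
        intro w hw γ
        obtain ⟨c, hc⟩ := hpow w hw
        rw [← hc, hHOM c γ, hcase c, one_mul]
      have hIT : (r : ℂ) * (∑ b : F, zp p ^ (fstar b).val) = (p : ℂ) ^ m := by
        have e1 : (r : ℂ) * (∑ b : F, zp p ^ (fstar b).val)
            = ∑ b : F, ∑ x : F, zp p ^ (f x + Algebra.trace (ZMod p) F (b * x)).val := by
          rw [Finset.mul_sum]
          exact Finset.sum_congr rfl fun b _ => (hrC b).symm
        rw [e1, Finset.sum_comm]
        have e2 : ∀ x : F, ∑ b : F, zp p ^ (f x + Algebra.trace (ZMod p) F (b * x)).val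
            = zp p ^ (f x).val * (if x = 0 then (Fintype.card F : ℂ) else 0) := by
          intro x
          rw [← zp_tr_sum p F x, Finset.mul_sum]
          refine Finset.sum_congr rfl fun b _ => ?_
          rw [mul_comm b x, zp_val_add]
        rw [Finset.sum_congr rfl fun x _ => e2 x]
        rw [Finset.sum_eq_single (0 : F)]
        · rw [if_pos rfl, hf0, ZMod.val_zero, pow_zero, one_mul, hcard]
          push_cast
          ring
        · intro b _ hb
          rw [if_neg hb, mul_zero]
        · intro hcon
          exact absurd (Finset.mem_univ 0) hcon
      have hε2 : ε * ε = 1 := by rcases hε with rfl | rfl <;> norm_num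
      have hL2 : L * L = 1 := by rcases hL1 with hl | hl <;> rw [hl] <;> norm_num
      have hrr' : r * r = (p : ℤ) ^ m := by
        calc r * r = (ε * ε) * ((L ^ (m/2) * L ^ (m/2)) * ((p:ℤ) ^ (m/2) * (p:ℤ) ^ (m/2))) := by
              rw [hr]; ring
        _ = (L * L) ^ (m/2) * (p:ℤ) ^ (m/2 + m/2) := by
              rw [hε2, ← mul_pow, pow_add]; ring
        _ = (p : ℤ) ^ m := by
              rw [hL2, one_pow, one_mul]
              obtain ⟨k, hk⟩ := hme
              congr 1
              omega
      have hrr : (r : ℂ) * (r : ℂ) = (p : ℂ) ^ m := by exact_mod_cast congrArg (Int.cast : ℤ → ℂ) hrr'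
      have hsum : ∑ b : F, zp p ^ (fstar b).val = (r : ℂ) :=
        mul_left_cancel₀ hr0 (hIT.trans hrr.symm)
      set Mc : ZMod p → ℤ := fun c => ((Finset.univ.filter fun b : F => fstar b = c).card : ℤ)
        with hMc
      have hfib : ∑ c : ZMod p, (Mc c : ℂ) * zp p ^ c.val = ((r : ℤ) : ℂ) := by
        rw [← hsum,
          ← Finset.sum_fiberwise Finset.univ (fun b : F => fstar b) (fun b => zp p ^ (fstar b).val)]
        refine Finset.sum_congr rfl fun c _ => ?_
        rw [Finset.sum_congr rfl (fun b hb => by rw [(Finset.mem_filter.mp hb).2]),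
          Finset.sum_const, nsmul_eq_mul, hMc]
        push_cast
        ring
      by_contra h0
      set c1 : ZMod p := if fstar 0 = 1 then 2 else 1 with hc1
      have h1ne : (1 : ZMod p) ≠ 0 := one_ne_zero
      have h2ne : (2 : ZMod p) ≠ 0 := by
        intro hcon
        have : ((2 : ℕ) : ZMod p) = 0 := by exact_mod_cast hcon
        have := (ZMod.natCast_eq_zero_iff 2 p).mp this
        have := Nat.le_of_dvd (by norm_num) this
        omega
      have hc1ne0 : c1 ≠ 0 := by
        rw [hc1]; split_ifs <;> assumption
      have hc1nefs : c1 ≠ fstar 0 := by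
        rw [hc1]
        split_ifs with hfs1
        · rw [hfs1]
          intro hcon
          exact h1ne (by linear_combination hcon)
        · exact fun hcon => hfs1 hcon.symm
      have hMeq : Mc (fstar 0) = Mc c1 := zp_coeffs p Mc r hfib h0 hc1ne0
      have hdvd : ∀ c : ZMod p, (p - 1) ∣
          ((Finset.univ.filter fun b : F => b ≠ 0 ∧ fstar b = c).card) := by
        intro c
        refine orbit_dvd p F _ (by simp) ?_
        intro a b hb
        rw [Finset.mem_filter] at hb ⊢
        have hb0 : b ≠ 0 := hb.2.1
        have ha0 : ((a : ZMod p) : ZMod p) ≠ 0 := a.ne_zero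
        refine ⟨Finset.mem_univ _, ?_, ?_⟩
        · exact mul_ne_zero (fun hz => a.ne_zero (halg (by simpa using hz))) hb0
        · rw [hinvf (a : ZMod p) a.ne_zero b, hb.2.2]
      have hsplit0 : (Finset.univ.filter fun b : F => fstar b = fstar 0)
          = insert (0 : F) (Finset.univ.filter fun b : F => b ≠ 0 ∧ fstar b = fstar 0) := by
        ext b
        simp only [Finset.mem_filter, Finset.mem_univ, true_and, Finset.mem_insert]
        constructor
        · intro hb
          rcases eq_or_ne b 0 with rfl | hb0
          · exact Or.inl rfl
          · exact Or.inr ⟨hb0, hb⟩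
        · rintro (rfl | ⟨_, hb⟩)
          · rfl
          · exact hb
      have hsplit1 : (Finset.univ.filter fun b : F => fstar b = c1)
          = Finset.univ.filter fun b : F => b ≠ 0 ∧ fstar b = c1 := by
        ext b
        simp only [Finset.mem_filter, Finset.mem_univ, true_and]
        constructor
        · intro hb
          refine ⟨?_, hb⟩
          rintro rfl
          exact hc1nefs hb.symm
        · exact fun hb => hb.2
      obtain ⟨k0, hk0⟩ := hdvd (fstar 0)
      obtain ⟨k1, hk1⟩ := hdvd c1
      have hcard0 : Mc (fstar 0) = 1 + (p - 1) * (k0 : ℤ) := by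
        rw [hMc]
        simp only
        rw [hsplit0, Finset.card_insert_of_notMem (by simp), hk0]
        push_cast [Nat.cast_sub (by omega : 1 ≤ p)]
        ring
      have hcard1 : Mc c1 = (p - 1) * (k1 : ℤ) := by
        rw [hMc]
        simp only
        rw [hsplit1, hk1]
        push_cast [Nat.cast_sub (by omega : 1 ≤ p)]
        ring
      rw [hcard0, hcard1] at hMeq
      have : ((p : ℤ) - 1) ∣ 1 := ⟨(k1 : ℤ) - k0, by linear_combination hMeq⟩
      have := Int.le_of_dvd one_pos this
      omega
    · push_neg at hcase
      obtain ⟨c, hc⟩ := hcase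
      have hh0 := hHOM c 0
      rw [mul_zero] at hh0
      by_contra h0
      exact hc (mul_right_cancel₀ h0 (by rw [one_mul]; exact hh0.symm))

  -- main computation
  set T : F → ZMod p := fun x => Algebra.trace (ZMod p) F (β * x) with hT
  set N : Finset F := Finset.univ.filter fun x : F => f x = 0 ∧ T x = 0 with hN
  have hpC : ((p:ℂ)) ≠ 0 := Nat.cast_ne_zero.mpr hp.pos.ne'
  have E1 : ∑ x : F, (∑ y : ZMod p, zp p ^ (y * f x).val) * (∑ z : ZMod p, zp p ^ (z * T x).val)
      = (p : ℂ) ^ 2 * (N.card : ℂ) := by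
    have hterm : ∀ x : F,
        (∑ y : ZMod p, zp p ^ (y * f x).val) * (∑ z : ZMod p, zp p ^ (z * T x).val)
        = if f x = 0 ∧ T x = 0 then (p : ℂ) ^ 2 else 0 := by
      intro x
      rw [zp_sum_mul p (f x), zp_sum_mul p (T x)]
      by_cases h1 : f x = 0 <;> by_cases h2 : T x = 0 <;> simp [h1, h2] <;> ring
    rw [Finset.sum_congr rfl fun x _ => hterm x, Finset.sum_ite, Finset.sum_const_zero,
      add_zero, Finset.sum_const, nsmul_eq_mul, hN]
    ring
  have E2 : ∑ x : F, (∑ y : ZMod p, zp p ^ (y * f x).val) * (∑ z : ZMod p, zp p ^ (z * T x).val)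
      = ∑ y : ZMod p, ∑ x : F, ∑ z : ZMod p, zp p ^ (y * f x + z * T x).val := by
    have e1 : ∀ x : F, (∑ y : ZMod p, zp p ^ (y * f x).val) * (∑ z : ZMod p, zp p ^ (z * T x).val)
        = ∑ y : ZMod p, ∑ z : ZMod p, zp p ^ (y * f x + z * T x).val := by
      intro x
      rw [Finset.sum_mul_sum]
      exact Finset.sum_congr rfl fun y _ => Finset.sum_congr rfl fun z _ =>
        (zp_val_add p _ _).symm
    rw [Finset.sum_congr rfl fun x _ => e1 x]
    exact Finset.sum_comm
  have E4 : ∑ x : F, ∑ z : ZMod p, zp p ^ ((0:ZMod p) * f x + z * T x).val = (p:ℂ)^m := by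
    rw [Finset.sum_comm]
    have e1 : ∀ z : ZMod p, ∑ x : F, zp p ^ ((0:ZMod p) * f x + z * T x).val
        = if algebraMap (ZMod p) F z * β = 0 then ((Fintype.card F : ℕ) : ℂ) else 0 := by
      intro z
      rw [← zp_tr_sum p F (algebraMap (ZMod p) F z * β)]
      refine Finset.sum_congr rfl fun x _ => ?_
      congr 1
      rw [zero_mul, zero_add, hT]
      simp only
      rw [hTr z (β * x), mul_assoc]
    rw [Finset.sum_congr rfl fun z _ => e1 z, Finset.sum_eq_single (0:ZMod p)]
    · rw [map_zero, zero_mul, if_pos rfl, hcard]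
      push_cast
      ring
    · intro z _ hz
      rw [if_neg (mul_ne_zero (fun hc => hz (halg (by simpa using hc))) hβ)]
    · simp
  have E5 : ∀ y : ZMod p, y ≠ 0 → ∑ x : F, ∑ z : ZMod p, zp p ^ (y * f x + z * T x).val
      = (r:ℂ) * ∑ w : ZMod p, zp p ^ (y * fstar (algebraMap (ZMod p) F w * β)).val := by
    intro y hy
    rw [Finset.sum_comm]
    have hre : ∑ z : ZMod p, ∑ x : F, zp p ^ (y * f x + z * T x).val
        = ∑ w : ZMod p, ∑ x : F, zp p ^ (y * f x + (y * w) * T x).val :=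
      (Fintype.sum_bijective (fun w : ZMod p => y * w) (mulLeft_bijective₀ y hy)
        (fun w => ∑ x : F, zp p ^ (y * f x + (y * w) * T x).val)
        (fun z => ∑ x : F, zp p ^ (y * f x + z * T x).val) (fun w => rfl)).symm
    rw [hre, Finset.mul_sum]
    refine Finset.sum_congr rfl fun w _ => ?_
    have hexp : ∀ x : F, y * f x + (y * w) * T x
        = y * (f x + Algebra.trace (ZMod p) F ((algebraMap (ZMod p) F w * β) * x)) := by
      intro x
      rw [hT]
      simp only
      calc y * f x + (y * w) * Algebra.trace (ZMod p) F (β * x)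
          = y * (f x + w * Algebra.trace (ZMod p) F (β * x)) := by ring
        _ = y * (f x + Algebra.trace (ZMod p) F ((algebraMap (ZMod p) F w * β) * x)) := by
            rw [hTr w (β * x), mul_assoc]
    rw [Finset.sum_congr rfl fun x _ => by rw [hexp x]]
    exact zp_galois p Finset.univ
      (fun x => f x + Algebra.trace (ZMod p) F ((algebraMap (ZMod p) F w * β) * x))
      r (fstar (algebraMap (ZMod p) F w * β)) (hrC _) y hy
  have E6 : ∀ w : ZMod p,
      ∑ y ∈ Finset.univ.erase (0:ZMod p), zp p ^ (y * fstar (algebraMap (ZMod p) F w * β)).val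
      = (if fstar (algebraMap (ZMod p) F w * β) = 0 then (p:ℂ) else 0) - 1 := by
    intro w
    set t : ZMod p := fstar (algebraMap (ZMod p) F w * β)
    have hsplit := Finset.add_sum_erase Finset.univ (fun y : ZMod p => zp p ^ (y * t).val)
      (Finset.mem_univ (0:ZMod p))
    simp only [zero_mul, ZMod.val_zero, pow_zero] at hsplit
    rw [← zp_sum_mul p t, ← hsplit]
    ring
  have hMval : ∑ w : ZMod p,
      ((if fstar (algebraMap (ZMod p) F w * β) = 0 then (p:ℂ) else 0) - 1)
      = (p:ℂ) * (1 + ((p:ℂ) - 1) * (if fstar β = 0 then 1 else 0)) - p := by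
    rw [Finset.sum_sub_distrib, Finset.sum_const, Finset.card_univ, ZMod.card]
    have e0 : (if fstar (algebraMap (ZMod p) F (0:ZMod p) * β) = 0 then (p:ℂ) else 0) = p := by
      rw [map_zero, zero_mul, if_pos hfs0]
    have ew : ∀ w : ZMod p, w ≠ 0 →
        (if fstar (algebraMap (ZMod p) F w * β) = 0 then (p:ℂ) else 0)
        = (if fstar β = 0 then (p:ℂ) else 0) := by
      intro w hw
      by_cases hb : fstar β = 0
      · rw [if_pos ((hiff w hw).mpr hb), if_pos hb]
      · rw [if_neg (fun hc => hb ((hiff w hw).mp hc)), if_neg hb]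
    rw [← Finset.add_sum_erase Finset.univ _ (Finset.mem_univ (0:ZMod p)), e0,
      Finset.sum_congr rfl (fun w hw => ew w (Finset.ne_of_mem_erase hw)),
      Finset.sum_const, Finset.card_erase_of_mem (Finset.mem_univ _), Finset.card_univ, ZMod.card,
      nsmul_eq_mul]
    have hcast : ((p - 1 : ℕ) : ℂ) = (p:ℂ) - 1 := by
      push_cast [Nat.cast_sub (by omega : 1 ≤ p)]
      ring
    rw [hcast]
    by_cases hb : fstar β = 0 <;> simp [hb] <;> ring
  have MAIN : (p : ℂ) ^ 2 * (N.card : ℂ)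
      = (p:ℂ)^m + (r:ℂ) * ((p:ℂ) * (1 + ((p:ℂ) - 1) * (if fstar β = 0 then 1 else 0)) - p) := by
    calc (p : ℂ) ^ 2 * (N.card : ℂ)
        = ∑ y : ZMod p, ∑ x : F, ∑ z : ZMod p, zp p ^ (y * f x + z * T x).val :=
          E1.symm.trans E2
      _ = (∑ x : F, ∑ z : ZMod p, zp p ^ ((0:ZMod p) * f x + z * T x).val)
          + ∑ y ∈ Finset.univ.erase (0:ZMod p), ∑ x : F, ∑ z : ZMod p,
              zp p ^ (y * f x + z * T x).val :=
          (Finset.add_sum_erase Finset.univ _ (Finset.mem_univ (0:ZMod p))).symm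
      _ = (p:ℂ)^m + (r:ℂ) * ((p:ℂ) * (1 + ((p:ℂ) - 1) * (if fstar β = 0 then 1 else 0)) - p) := by
          rw [E4]
          congr 1
          rw [Finset.sum_congr rfl fun y hy => E5 y (Finset.ne_of_mem_erase hy), ← Finset.mul_sum,
            Finset.sum_comm, Finset.sum_congr rfl fun w _ => E6 w, hMval]
  -- exponent bookkeeping
  obtain ⟨k, hk⟩ := hme
  set j := (m - 2) / 2 with hjdef
  have e1 : m - 2 = j + j := by omega
  have e2 : m / 2 = j + 1 := by omega
  have e3 : m = j + j + 2 := by omega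
  constructor
  · intro hfsb
    rw [if_pos hfsb] at MAIN
    have key : (p:ℂ)^2 * ((N.card : ℕ) : ℂ)
        = (p:ℂ)^2 * ((((p : ℤ) ^ (m - 2)
            + ε * L ^ (m / 2) * ((p:ℤ) - 1) * (p : ℤ) ^ j) : ℤ) : ℂ) := by
      rw [MAIN, hr]
      push_cast
      rw [e1, e2, e3]
      ring
    have := mul_left_cancel₀ (pow_ne_zero 2 hpC) key
    exact_mod_cast this
  · intro hfsb
    rw [if_neg hfsb] at MAIN
    have key : (p:ℂ)^2 * ((N.card : ℕ) : ℂ) = (p:ℂ)^2 * (((p : ℤ) ^ (m - 2) : ℤ) : ℂ) := by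
      rw [MAIN]
      push_cast
      rw [e1, e3]
      ring
    have := mul_left_cancel₀ (pow_ne_zero 2 hpC) key
    exact_mod_cast this
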